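/- Let k and r be positive integers and let G be a 2-connected (multi)graph with maximum degree at least 2kr. Then G contains k pairwise edge-disjoint subgraphs, each of which contains θ_r as a contraction, where θ_r is the multigraph with two vertices joined by r parallel edges. -/

import Mathlib

open SimpleGraph

namespace ThetaPack

variable {V : Type} {G : SimpleGraph V}

/-- Reachability within a subgraph, via walks of the ambient graph whose
walk-subgraph is contained in `D`. -/
def DR (D : G.Subgraph) (x y : V) : Prop := ∃ p : G.Walk x y, p.toSubgraph ≤ D

lemma DR.refl {D : G.Subgraph} {x : V} (hx : x ∈ D.verts) : DR D x x :=
  ⟨Walk.nil, by rw [Walk.toSubgraph, SimpleGraph.singletonSubgraph_le_iff]; exact hx⟩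

lemma DR.symm {D : G.Subgraph} {x y : V} : DR D x y → DR D y x := by
  rintro ⟨p, hp⟩; exact ⟨p.reverse, by rwa [Walk.toSubgraph_reverse]⟩

lemma DR.trans {D : G.Subgraph} {x y z : V} : DR D x y → DR D y z → DR D x z := by
  rintro ⟨p, hp⟩ ⟨q, hq⟩
  exact ⟨p.append q, by rw [Walk.toSubgraph_append]; exact sup_le hp hq⟩

lemma DR.mono {D D' : G.Subgraph} (h : D ≤ D') {x y : V} : DR D x y → DR D' x y := by
  rintro ⟨p, hp⟩; exact ⟨p, hp.trans h⟩

lemma DR.mem_left {D : G.Subgraph} {x y : V} (h : DR D x y) : x ∈ D.verts := by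
  obtain ⟨p, hp⟩ := h; exact hp.1 p.start_mem_verts_toSubgraph

lemma DR.mem_right {D : G.Subgraph} {x y : V} (h : DR D x y) : y ∈ D.verts := by
  obtain ⟨p, hp⟩ := h; exact hp.1 p.end_mem_verts_toSubgraph

lemma subgraphOfAdj_le {D : G.Subgraph} {a b : V} (hG : G.Adj a b) (h : D.Adj a b) :
    G.subgraphOfAdj hG ≤ D := by
  constructor
  · rintro z hz
    simp only [subgraphOfAdj_verts, Set.mem_insert_iff, Set.mem_singleton_iff] at hz
    rcases hz with rfl | rfl
    · exact h.fst_mem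
    · exact h.snd_mem
  · intro u v huv
    simp only [subgraphOfAdj_adj] at huv
    rw [Sym2.eq_iff] at huv
    rcases huv with ⟨rfl, rfl⟩ | ⟨rfl, rfl⟩
    · exact h
    · exact h.symm

lemma DR.adj {D : G.Subgraph} {x y : V} (h : D.Adj x y) : DR D x y :=
  ⟨Walk.cons h.adj_sub Walk.nil, by
    rw [Walk.toSubgraph_cons_nil_eq_subgraphOfAdj]
    exact subgraphOfAdj_le _ h⟩

lemma dr_of_mem_support {D : G.Subgraph} : ∀ {x y : V} (p : G.Walk x y),
    p.toSubgraph ≤ D → ∀ z ∈ p.support, DR D x z := by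
  intro x y p
  induction p with
  | nil =>
    intro hle z hz
    simp only [Walk.support_nil, List.mem_singleton] at hz
    subst hz
    exact DR.refl (hle.1 (by simp [Walk.toSubgraph]))
  | @cons a b c h q ih =>
    intro hle z hz
    have hle1 : G.subgraphOfAdj h ≤ D := le_trans le_sup_left hle
    have hle2 : q.toSubgraph ≤ D := le_trans le_sup_right hle
    have hadj : D.Adj a b := hle1.2 (by simp)
    rcases List.mem_cons.mp (by simpa using hz) with rfl | hz'
    · exact DR.refl hadj.fst_mem
    · exact (DR.adj hadj).trans (ih hle2 z hz')

/-- Bundling into an induced subgraph. -/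
lemma le_induce {H D : G.Subgraph} {s : Set V} (hle : H ≤ D) (hs : H.verts ⊆ s) :
    H ≤ D.induce s := by
  constructor
  · exact hs
  · intro a b hab
    exact ⟨hs hab.fst_mem, hs hab.snd_mem, hle.2 hab⟩

/-- A subgraph is connected if all of its vertices can reach a common vertex. -/
lemma conn_to {H : G.Subgraph} {ρ : V} (hρ : ρ ∈ H.verts)
    (h : ∀ a ∈ H.verts, DR H a ρ) : H.Connected := by
  rw [Subgraph.connected_iff_forall_exists_walk_subgraph]
  refine ⟨⟨ρ, hρ⟩, ?_⟩
  intro u v hu hv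
  exact ((h u hu).trans (h v hv).symm : DR H u v)

lemma single_vertex_connected {H : G.Subgraph} {x : V} (hv : H.verts = {x}) : H.Connected := by
  refine conn_to (ρ := x) (by simp [hv]) (fun a ha => ?_)
  rw [hv] at ha
  rcases ha with rfl
  exact DR.refl (by simp [hv])



lemma induce_le (D : G.Subgraph) {s : Set V} (hs : s ⊆ D.verts) : D.induce s ≤ D := by
  conv_rhs => rw [← Subgraph.induce_self_verts (G' := D)]
  exact Subgraph.induce_mono_right hs

lemma induce_induce (D : G.Subgraph) {s t : Set V} (ht : t ⊆ s) :
    (D.induce s).induce t = D.induce t := by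
  ext x y
  · rfl
  · simp only [Subgraph.induce_adj]
    constructor
    · rintro ⟨hx, hy, -, -, h⟩; exact ⟨hx, hy, h⟩
    · rintro ⟨hx, hy, h⟩; exact ⟨hx, hy, ht hx, ht hy, h⟩

lemma walk_split {D : G.Subgraph} : ∀ {x ρ : V} (p : G.Walk x ρ),
    p.toSubgraph ≤ D → x ≠ ρ → ∃ y, D.Adj y ρ ∧ DR (D.deleteVerts {ρ}) x y := by
  intro x ρ p
  induction p with
  | nil => intro _ h; exact absurd rfl h
  | @cons a b c h q ih =>
    intro hle hne
    have hle1 : G.subgraphOfAdj h ≤ D := le_trans le_sup_left hle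
    have hle2 : q.toSubgraph ≤ D := le_trans le_sup_right hle
    have hadj : D.Adj a b := hle1.2 (by simp)
    have hamem : a ∈ (D.deleteVerts {c}).verts := by
      rw [Subgraph.deleteVerts_verts]
      exact ⟨hadj.fst_mem, by simpa using hne⟩
    by_cases hb : b = c
    · subst hb
      exact ⟨a, hadj, DR.refl hamem⟩
    · obtain ⟨y, hy1, hy2⟩ := ih hle2 hb
      refine ⟨y, hy1, DR.trans (DR.adj ?_) hy2⟩
      rw [Subgraph.deleteVerts_adj]
      exact ⟨hadj.fst_mem, by simpa using hne, hadj.snd_mem, by simpa using hb, hadj⟩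

lemma reach_to_nbhd {D : G.Subgraph} {ρ x : V} (hconn : D.Connected) (hρ : ρ ∈ D.verts)
    (hx : x ∈ D.verts) (hne : x ≠ ρ) :
    ∃ y, D.Adj y ρ ∧ DR (D.deleteVerts {ρ}) x y := by
  obtain ⟨-, hw⟩ := (Subgraph.connected_iff_forall_exists_walk_subgraph D).mp hconn
  obtain ⟨p, hp⟩ := hw hx hρ
  exact walk_split p hp hne

/-- `X` is a union of connected components of `D - ρ`. -/
def Closed (D : G.Subgraph) (ρ : V) (X : Set V) : Prop :=
  X ⊆ D.verts \ {ρ} ∧ ∀ x ∈ X, ∀ y, DR (D.deleteVerts {ρ}) x y → y ∈ X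

lemma Closed.induce_connected {D : G.Subgraph} {ρ : V} {X : Set V}
    (hconn : D.Connected) (hρ : ρ ∈ D.verts) (hX : Closed D ρ X) :
    (D.induce (X ∪ {ρ})).Connected := by
  refine conn_to (ρ := ρ) (by simp) ?_
  rintro a (ha | ha)
  swap
  · obtain rfl : a = ρ := ha
    exact DR.refl (Or.inr rfl)
  · have haD : a ∈ D.verts := (hX.1 ha).1
    have hane : a ≠ ρ := by have := (hX.1 ha).2; simpa using this
    obtain ⟨y, hy1, p, hp⟩ := reach_to_nbhd hconn hρ haD hane
    have hyX : y ∈ X := hX.2 a ha y ⟨p, hp⟩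
    have hsupp : ∀ z ∈ p.support, z ∈ X := fun z hz =>
      hX.2 a ha z (dr_of_mem_support p hp z hz)
    refine DR.trans (D := D.induce (X ∪ {ρ})) ⟨p, ?_⟩ (DR.adj ?_)
    · refine le_induce (hp.trans (Subgraph.deleteVerts_le)) ?_
      intro z hz
      rw [Walk.mem_verts_toSubgraph] at hz
      exact Or.inl (hsupp z hz)
    · exact ⟨Or.inl hyX, Or.inr rfl, hy1⟩

lemma Closed.delete_connected {D : G.Subgraph} {ρ : V} {X : Set V}
    (hconn : D.Connected) (hρ : ρ ∈ D.verts) (hX : Closed D ρ X) :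
    (D.deleteVerts X).Connected := by
  have hρX : ρ ∉ X := fun h => by have := (hX.1 h).2; simp at this
  refine conn_to (ρ := ρ) (by simp [hρ, hρX]) ?_
  rintro a ⟨haD, haX⟩
  by_cases hane : a = ρ
  · subst hane; exact DR.refl (by simp [hρ, hρX])
  · obtain ⟨y, hy1, p, hp⟩ := reach_to_nbhd hconn hρ haD hane
    have hsupp : ∀ z ∈ p.support, z ∈ D.verts \ X := by
      intro z hz
      have hz' := dr_of_mem_support p hp z hz
      have hzD : z ∈ D.verts := (Subgraph.deleteVerts_verts ▸ hz'.mem_right).1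
      refine ⟨hzD, fun hzX => haX ?_⟩
      exact hX.2 z hzX a hz'.symm
    have hyX : y ∉ X := fun h => by
      have := hsupp y (by rw [← Walk.mem_verts_toSubgraph]; exact p.end_mem_verts_toSubgraph)
      exact this.2 h
    refine DR.trans (D := D.deleteVerts X) ⟨p, ?_⟩ (DR.adj ?_)
    · refine le_induce (hp.trans (Subgraph.deleteVerts_le)) ?_
      intro z hz
      rw [Walk.mem_verts_toSubgraph] at hz
      exact hsupp z hz
    · rw [Subgraph.deleteVerts_adj]
      exact ⟨hy1.fst_mem, hyX, hρ, hρX, hy1⟩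

variable [Fintype V]

lemma split3 {r : ℕ} (hr : 0 < r) :
    ∀ (n : ℕ) (D : G.Subgraph) (ρ : V) (S : Set V),
      D.verts.ncard + D.edgeSet.ncard ≤ n →
      D.Connected → ρ ∈ D.verts → S ⊆ D.verts \ {ρ} → r ≤ S.ncard →
      ∃ u X, u ∈ D.verts ∧ X ⊆ D.verts \ {u} ∧ ρ ∉ X ∧
        r ≤ (S ∩ X).ncard ∧ (S ∩ X).ncard ≤ 2 * r - 1 ∧
        (D.induce (X ∪ {u})).Connected ∧ (D.deleteVerts X).Connected := by
  intro n
  induction n with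
  | zero =>
    intro D ρ S hμ hconn hρ hS hcard
    have h1 : 0 < D.verts.ncard := (Set.ncard_pos (Set.toFinite _)).mpr ⟨ρ, hρ⟩
    omega
  | succ n ih =>
    intro D ρ S hμ hconn hρ hS hcard
    set D' := D.deleteVerts {ρ} with hD'
    set K : V → Set V := fun z => {y | DR D' z y} with hK
    have hKmem : ∀ z, K z ⊆ D.verts \ {ρ} := by
      intro z y hy
      have := (hy : DR D' z y).mem_right
      rwa [Subgraph.deleteVerts_verts] at this
    have hKclosed : ∀ z, Closed D ρ (K z) :=
      fun z => ⟨hKmem z, fun x hx y hxy => (hx : DR D' z x).trans hxy⟩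
    have hKself : ∀ z ∈ D.verts \ {ρ}, z ∈ K z := by
      intro z hz
      exact DR.refl (by rw [Subgraph.deleteVerts_verts]; exact hz)
    by_cases hcase : ∃ z ∈ D.verts \ {ρ}, r ≤ (S ∩ K z).ncard
    · -- some heavy component
      obtain ⟨z, hzW, hzr⟩ := hcase
      by_cases hprop : K z ∪ {ρ} = D.verts
      · -- the component together with ρ is everything
        have hW : D.verts \ {ρ} ⊆ K z := by
          intro w hw
          have hw' : w ∈ K z ∪ {ρ} := hprop ▸ hw.1
          rcases hw' with h | h
          · exact h
          · exact absurd h hw.2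
        obtain ⟨y₀, hy₀adj, -⟩ := reach_to_nbhd hconn hρ hzW.1 (by simpa using hzW.2)
        have hy₀ne : y₀ ≠ ρ := (hy₀adj.adj_sub).ne
        have hy₀D : y₀ ∈ D.verts := hy₀adj.fst_mem
        have hy₀W : y₀ ∈ D.verts \ {ρ} := ⟨hy₀D, by simpa using hy₀ne⟩
        by_cases huniq : ∀ y, D.Adj y ρ → y = y₀
        · by_cases hS2 : r ≤ (S \ {y₀}).ncard
          · -- recurse on D - ρ with root y₀
            have hD'verts : D'.verts = D.verts \ {ρ} := Subgraph.deleteVerts_verts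
            have hD'conn : D'.Connected := by
              refine conn_to (ρ := z) (by rw [hD'verts]; exact hzW) ?_
              intro a ha
              rw [hD'verts] at ha
              exact (hW ha : DR D' z a).symm
            have hmeas : D'.verts.ncard + D'.edgeSet.ncard ≤ n := by
              have h1 : D'.verts.ncard < D.verts.ncard := by
                refine Set.ncard_lt_ncard ?_ (Set.toFinite _)
                rw [hD'verts]
                exact ⟨Set.diff_subset, fun hsub => (hsub hρ).2 rfl⟩
              have h2 : D'.edgeSet.ncard ≤ D.edgeSet.ncard :=
                Set.ncard_le_ncard (Subgraph.edgeSet_mono Subgraph.deleteVerts_le)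
                  (Set.toFinite _)
              omega
            obtain ⟨u, X, hu, hX, hy₀X, h1, h2, h3, h4⟩ :=
              ih D' y₀ (S \ {y₀}) hmeas hD'conn (by rw [hD'verts]; exact hy₀W)
                (by intro a ha; rw [hD'verts]
                    exact ⟨⟨(hS ha.1).1, ha.1 |> fun h => (hS h).2⟩, ha.2⟩) hS2
            have hXW : X ⊆ D.verts \ {ρ} := fun a ha => hD'verts ▸ (hX ha).1
            have hy₀X' : y₀ ∉ X := hy₀X
            have hSX : S ∩ X = (S \ {y₀}) ∩ X := by
              ext a
              constructor
              · rintro ⟨h5, h6⟩; exact ⟨⟨h5, fun h7 => hy₀X' (h7 ▸ h6)⟩, h6⟩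
              · rintro ⟨h5, h6⟩; exact ⟨h5.1, h6⟩
            have hXu : X ∪ {u} ⊆ D.verts \ {ρ} := by
              rintro a (ha | ha)
              · exact hXW ha
              · obtain rfl : a = u := ha
                exact hD'verts ▸ hu
            refine ⟨u, X, (hD'verts ▸ hu : u ∈ D.verts \ {ρ}).1,
              fun a ha => ⟨(hXW ha).1, (hX ha).2⟩, fun h => (hXW h).2 rfl,
              by rw [hSX]; exact h1, by rw [hSX]; exact h2, ?_, ?_⟩
            · have : D.induce (X ∪ {u}) = D'.induce (X ∪ {u}) := by
                rw [hD']
                exact (induce_induce D (hXu)).symm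
              rw [this]
              exact h3
            · -- D.deleteVerts X connected, via y₀
              have hle : D'.deleteVerts X ≤ D.deleteVerts X := by
                refine le_induce (Subgraph.deleteVerts_le.trans Subgraph.deleteVerts_le) ?_
                intro a ha
                rw [Subgraph.deleteVerts_verts] at ha
                exact ⟨(hD'verts ▸ ha.1 : a ∈ D.verts \ {ρ}).1, ha.2⟩
              have hy₀mem : y₀ ∈ (D'.deleteVerts X).verts := by
                rw [Subgraph.deleteVerts_verts, hD'verts]
                exact ⟨hy₀W, hy₀X'⟩
              refine conn_to (ρ := y₀) (⟨hy₀D, hy₀X'⟩ : y₀ ∈ D.verts \ X) ?_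
              rintro a ⟨haD, haX⟩
              by_cases hane : a = ρ
              · subst hane
                refine DR.adj ?_
                rw [Subgraph.deleteVerts_adj]
                exact ⟨hρ, haX, hy₀D, hy₀X', hy₀adj.symm⟩
              · have ham : a ∈ (D'.deleteVerts X).verts := by
                  rw [Subgraph.deleteVerts_verts, hD'verts]
                  exact ⟨⟨haD, by simpa using hane⟩, haX⟩
                obtain ⟨-, hw⟩ :=
                  (Subgraph.connected_iff_forall_exists_walk_subgraph _).mp h4
                obtain ⟨p, hp⟩ := hw ham hy₀mem
                exact DR.mono hle ⟨p, hp⟩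
          · -- S has exactly r elements; take everything
            have hcup : S.ncard ≤ r := by
              have h5 : S ⊆ (S \ {y₀}) ∪ {y₀} := by
                intro a ha
                by_cases h : a = y₀
                · exact Or.inr (by simp [h])
                · exact Or.inl ⟨ha, by simpa using h⟩
              have h6 := (Set.ncard_le_ncard h5 (Set.toFinite _)).trans
                (Set.ncard_union_le _ _)
              simp only [Set.ncard_singleton] at h6
              omega
            have hSeq : S ∩ (D.verts \ {ρ}) = S := Set.inter_eq_left.mpr hS
            refine ⟨ρ, D.verts \ {ρ}, hρ, subset_rfl, by simp, ?_, ?_, ?_, ?_⟩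
            · rw [hSeq]; exact hcard
            · rw [hSeq]; omega
            · have : D.verts \ {ρ} ∪ {ρ} = D.verts := by
                rw [Set.diff_union_self]
                exact Set.union_eq_self_of_subset_right (by simpa using hρ)
              rw [this, Subgraph.induce_self_verts]
              exact hconn
            · refine single_vertex_connected (x := ρ) ?_
              rw [Subgraph.deleteVerts_verts]
              ext a
              simp only [Set.mem_diff, Set.mem_singleton_iff]
              constructor
              · rintro ⟨h5, h6⟩
                by_contra h7
                exact h6 ⟨h5, h7⟩
              · rintro rfl
                exact ⟨hρ, fun h => h.2 rfl⟩
        · -- ρ has at least two neighbours: delete superfluous edges at ρ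
          push_neg at huniq
          obtain ⟨y₁, hy₁adj, hy₁ne⟩ := huniq
          set Del : Set (Sym2 V) := {e | ∃ w, w ≠ y₀ ∧ e = s(ρ, w)} with hDel
          set D₃ := D.deleteEdges Del with hD₃
          have hD₃verts : D₃.verts = D.verts := rfl
          have hD'le : D' ≤ D₃ := by
            constructor
            · intro a ha
              exact (Subgraph.deleteVerts_verts ▸ ha : a ∈ D.verts \ {ρ}).1
            · intro a b hab
              rw [Subgraph.deleteVerts_adj] at hab
              refine ⟨hab.2.2.2.2, ?_⟩
              rintro ⟨w, hw, heq⟩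
              rw [Sym2.eq_iff] at heq
              rcases heq with ⟨h5, h6⟩ | ⟨h5, h6⟩
              · exact hab.2.1 (by simp [h5])
              · exact hab.2.2.2.1 (by simp [h6])
          have hy₀adj₃ : D₃.Adj y₀ ρ := by
            refine ⟨hy₀adj, ?_⟩
            rintro ⟨w, hw, heq⟩
            rw [Sym2.eq_iff] at heq
            rcases heq with ⟨h5, h6⟩ | ⟨h5, h6⟩
            · exact hy₀ne h5
            · exact hw h5.symm
          have hD₃conn : D₃.Connected := by
            refine conn_to (ρ := ρ) hρ ?_
            intro a ha
            by_cases hane : a = ρ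
            · subst hane; exact DR.refl hρ
            · have haK : a ∈ K z := hW ⟨ha, by simpa using hane⟩
              have h5 : DR D' a y₀ := (haK : DR D' z a).symm.trans (hW hy₀W)
              exact (h5.mono hD'le).trans (DR.adj hy₀adj₃)
          have hmeas : D₃.verts.ncard + D₃.edgeSet.ncard ≤ n := by
            have h5 : D₃.edgeSet.ncard < D.edgeSet.ncard := by
              refine Set.ncard_lt_ncard ⟨Subgraph.edgeSet_mono (Subgraph.deleteEdges_le _), ?_⟩
                (Set.toFinite _)
              intro hsub
              have h6 : s(ρ, y₁) ∈ D.edgeSet := Subgraph.mem_edgeSet.mpr hy₁adj.symm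
              have h7 := hsub h6
              rw [Subgraph.mem_edgeSet] at h7
              exact h7.2 ⟨y₁, hy₁ne, rfl⟩
            have h8 : D₃.verts.ncard = D.verts.ncard := rfl
            omega
          obtain ⟨u, X, hu, hX, hρX, h1, h2, h3, h4⟩ :=
            ih D₃ ρ S hmeas hD₃conn hρ hS hcard
          refine ⟨u, X, hu, hX, hρX, h1, h2, ?_, ?_⟩
          · exact Subgraph.Connected.mono
              (Subgraph.induce_mono_left (Subgraph.deleteEdges_le _)) rfl h3
          · exact Subgraph.Connected.mono
              (Subgraph.induce_mono (Subgraph.deleteEdges_le _) subset_rfl) rfl h4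
      · -- proper heavy component: recurse into it
        have hKsub : K z ∪ {ρ} ⊆ D.verts := by
          rintro a (ha | ha)
          · exact (hKmem z ha).1
          · obtain rfl : a = ρ := ha; exact hρ
        set D₂ := D.induce (K z ∪ {ρ}) with hD₂
        have hD₂conn : D₂.Connected := (hKclosed z).induce_connected hconn hρ
        have hmeas : D₂.verts.ncard + D₂.edgeSet.ncard ≤ n := by
          have h5 : D₂.verts.ncard < D.verts.ncard :=
            Set.ncard_lt_ncard ⟨hKsub, fun hsub => hprop (le_antisymm hKsub hsub)⟩
              (Set.toFinite _)
          have h6 : D₂.edgeSet.ncard ≤ D.edgeSet.ncard :=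
            Set.ncard_le_ncard (Subgraph.edgeSet_mono (induce_le D hKsub)) (Set.toFinite _)
          omega
        obtain ⟨u, X, hu, hX, hρX, h1, h2, h3, h4⟩ :=
          ih D₂ ρ (S ∩ K z) hmeas hD₂conn (Or.inr rfl)
            (fun a ha => ⟨Or.inl ha.2, by simpa using (hKmem z ha.2).2⟩) hzr
        have hXK : X ⊆ K z := by
          intro a ha
          rcases (hX ha).1 with h | h
          · exact h
          · obtain rfl : a = ρ := h
            exact absurd ha hρX
        have hSX : S ∩ X = (S ∩ K z) ∩ X := by
          ext a
          exact ⟨fun h => ⟨⟨h.1, hXK h.2⟩, h.2⟩, fun h => ⟨h.1.1, h.2⟩⟩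
        have hXu : X ∪ {u} ⊆ K z ∪ {ρ} := by
          rintro a (ha | ha)
          · exact Or.inl (hXK ha)
          · obtain rfl : a = u := ha; exact hu
        refine ⟨u, X, hKsub hu, fun a ha => ⟨hKsub (hX ha).1, (hX ha).2⟩, hρX,
          by rw [hSX]; exact h1, by rw [hSX]; exact h2, ?_, ?_⟩
        · have : D₂.induce (X ∪ {u}) = D.induce (X ∪ {u}) := induce_induce D hXu
          rw [← this]
          exact h3
        · -- D.deleteVerts X connected
          have hle : D₂.deleteVerts X ≤ D.deleteVerts X := by
            refine le_induce (Subgraph.deleteVerts_le.trans (induce_le D hKsub)) ?_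
            intro a ha
            rw [Subgraph.deleteVerts_verts] at ha
            exact ⟨hKsub ha.1, ha.2⟩
          have hρmem : ρ ∈ (D₂.deleteVerts X).verts := by
            rw [Subgraph.deleteVerts_verts]
            exact ⟨Or.inr rfl, hρX⟩
          refine conn_to (ρ := ρ) ⟨hρ, hρX⟩ ?_
          rintro a ⟨haD, haX⟩
          by_cases haK : a ∈ K z ∪ {ρ}
          · have ham : a ∈ (D₂.deleteVerts X).verts := by
              rw [Subgraph.deleteVerts_verts]; exact ⟨haK, haX⟩
            obtain ⟨-, hw⟩ :=
              (Subgraph.connected_iff_forall_exists_walk_subgraph _).mp h4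
            obtain ⟨p, hp⟩ := hw ham hρmem
            exact DR.mono hle ⟨p, hp⟩
          · have hane : a ≠ ρ := fun h => haK (Or.inr h)
            obtain ⟨y, hyadj, p, hp⟩ := reach_to_nbhd hconn hρ haD hane
            have hsupp : ∀ w ∈ p.support, w ∈ D.verts \ X := by
              intro w hw
              have h5 : DR D' a w := dr_of_mem_support p hp w hw
              have h6 : w ∈ D.verts := (Subgraph.deleteVerts_verts ▸ h5.mem_right :
                w ∈ D.verts \ {ρ}).1
              refine ⟨h6, fun hwX => haK (Or.inl ?_)⟩
              exact ((hXK hwX : DR D' z w).trans h5.symm : DR D' z a)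
            have hyX : y ∉ X := fun h =>
              (hsupp y (by rw [← Walk.mem_verts_toSubgraph]; exact p.end_mem_verts_toSubgraph)).2 h
            refine DR.trans (D := D.deleteVerts X) ⟨p, ?_⟩ (DR.adj ?_)
            · refine le_induce (hp.trans Subgraph.deleteVerts_le) ?_
              intro w hw
              rw [Walk.mem_verts_toSubgraph] at hw
              exact hsupp w hw
            · rw [Subgraph.deleteVerts_adj]
              exact ⟨hyadj.fst_mem, hyX, hρ, hρX, hyadj⟩
    · -- all components are light: greedy
      push_neg at hcase
      set T : Set ℕ := {m | ∃ X : Set V, Closed D ρ X ∧ r ≤ (S ∩ X).ncard ∧ (S ∩ X).ncard = m}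
        with hT
      have hTne : T.Nonempty := by
        refine ⟨S.ncard, D.verts \ {ρ}, ⟨subset_rfl, ?_⟩, ?_, ?_⟩
        · intro x hx y hxy
          exact Subgraph.deleteVerts_verts ▸ hxy.mem_right
        · rw [Set.inter_eq_left.mpr hS]; exact hcard
        · rw [Set.inter_eq_left.mpr hS]
      obtain ⟨X, hXcl, hXr, hXm⟩ := Nat.sInf_mem hTne
      refine ⟨ρ, X, hρ, hXcl.1, fun h => (hXcl.1 h).2 rfl, hXr, ?_,
        hXcl.induce_connected hconn hρ, hXcl.delete_connected hconn hρ⟩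
      by_contra h2
      have h2' : 2 * r ≤ (S ∩ X).ncard := by omega
      obtain ⟨s, hs⟩ : (S ∩ X).Nonempty := by
        refine (Set.ncard_pos (Set.toFinite _)).mp ?_
        omega
      have hsW : s ∈ D.verts \ {ρ} := hXcl.1 hs.2
      set X₂ := X \ K s with hX₂
      have hX₂cl : Closed D ρ X₂ := by
        refine ⟨fun a ha => hXcl.1 ha.1, ?_⟩
        intro x hx y hxy
        refine ⟨hXcl.2 x hx.1 y hxy, fun hyK => hx.2 ?_⟩
        exact (hyK : DR D' s y).trans hxy.symm
      have hsub : S ∩ X ⊆ (S ∩ X₂) ∪ (S ∩ K s) := by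
        rintro a ⟨haS, haX⟩
        by_cases h : a ∈ K s
        · exact Or.inr ⟨haS, h⟩
        · exact Or.inl ⟨haS, haX, h⟩
      have hcard2 : (S ∩ X).ncard ≤ (S ∩ X₂).ncard + (S ∩ K s).ncard :=
        (Set.ncard_le_ncard hsub (Set.toFinite _)).trans (Set.ncard_union_le _ _)
      have hKs : (S ∩ K s).ncard < r := hcase s hsW
      have hX₂r : r ≤ (S ∩ X₂).ncard := by omega
      have hless : (S ∩ X₂).ncard < (S ∩ X).ncard := by
        refine Set.ncard_lt_ncard ⟨fun a ha => ⟨ha.1, ha.2.1⟩, ?_⟩ (Set.toFinite _)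
        intro hsub2
        exact (hsub2 hs).2.2 (hKself s hsW)
      have hmem : (S ∩ X₂).ncard ∈ T := ⟨X₂, hX₂cl, hX₂r, rfl⟩
      have := Nat.sInf_le hmem
      omega

lemma pack {r : ℕ} (hr : 0 < r) :
    ∀ (k : ℕ) (D : G.Subgraph) (S : Set V), D.Connected → S ⊆ D.verts →
      2 * k * r ≤ S.ncard →
      ∃ (C : Fin k → G.Subgraph) (N : Fin k → Set V),
        (∀ i, C i ≤ D) ∧ (∀ i, (C i).Connected) ∧ (∀ i, N i ⊆ S) ∧
        (∀ i, N i ⊆ (C i).verts) ∧ (∀ i, (N i).ncard = r) ∧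
        (∀ i j, i ≠ j → Disjoint (N i) (N j)) ∧
        (∀ i j, i ≠ j → Disjoint (C i).edgeSet (C j).edgeSet) := by
  intro k
  induction k with
  | zero =>
    intro D S _ _ _
    refine ⟨Fin.elim0, Fin.elim0, ?_, ?_, ?_, ?_, ?_, ?_, ?_⟩ <;> intro i <;> exact i.elim0
  | succ k ih =>
    intro D S hconn hS hcard
    obtain ⟨ρ, hρ⟩ := hconn.nonempty
    have hS' : S \ {ρ} ⊆ D.verts \ {ρ} := fun a ha => ⟨hS ha.1, ha.2⟩
    have hcard' : r ≤ (S \ {ρ}).ncard := by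
      have h5 : S ⊆ (S \ {ρ}) ∪ {ρ} := by
        intro a ha
        by_cases h : a = ρ
        · exact Or.inr (by simp [h])
        · exact Or.inl ⟨ha, by simpa using h⟩
      have h6 := (Set.ncard_le_ncard h5 (Set.toFinite _)).trans (Set.ncard_union_le _ _)
      simp only [Set.ncard_singleton] at h6
      have : 2 * (k + 1) * r = 2 * k * r + 2 * r := by ring
      omega
    obtain ⟨u, X, hu, hX, hρX, h1, h2, h3, h4⟩ :=
      split3 hr (D.verts.ncard + D.edgeSet.ncard) D ρ (S \ {ρ}) le_rfl hconn hρ hS' hcard'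
    obtain ⟨N₀, hN₀sub, hN₀card⟩ := Set.exists_subset_card_eq h1
    set C₀ := D.induce (X ∪ {u}) with hC₀
    have hXD : X ⊆ D.verts := fun a ha => (hX ha).1
    have hXuD : X ∪ {u} ⊆ D.verts := by
      rintro a (ha | ha)
      · exact hXD ha
      · obtain rfl : a = u := ha; exact hu
    -- the remaining set
    set S₂ := S \ (X ∪ {u}) with hS₂
    have hS₂sub : S₂ ⊆ (D.deleteVerts X).verts := by
      rintro a ⟨haS, haX⟩
      rw [Subgraph.deleteVerts_verts]
      exact ⟨hS haS, fun h => haX (Or.inl h)⟩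
    have hSXeq : S ∩ X = (S \ {ρ}) ∩ X := by
      ext a
      constructor
      · rintro ⟨h5, h6⟩; exact ⟨⟨h5, fun h7 => hρX (h7 ▸ h6)⟩, h6⟩
      · rintro ⟨h5, h6⟩; exact ⟨h5.1, h6⟩
    have hS₂card : 2 * k * r ≤ S₂.ncard := by
      have h5 : S ⊆ S₂ ∪ ((S ∩ X) ∪ {u}) := by
        intro a ha
        by_cases h : a ∈ X ∪ {u}
        · rcases h with h | h
          · exact Or.inr (Or.inl ⟨ha, h⟩)
          · exact Or.inr (Or.inr h)
        · exact Or.inl ⟨ha, h⟩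
      have h6 := (Set.ncard_le_ncard h5 (Set.toFinite _)).trans (Set.ncard_union_le _ _)
      have h7 := Set.ncard_union_le (S ∩ X) ({u} : Set V)
      have h8 : (S ∩ X).ncard ≤ 2 * r - 1 := by rw [hSXeq]; exact h2
      simp only [Set.ncard_singleton] at h7
      have h9 : 2 * (k + 1) * r = 2 * k * r + 2 * r := by ring
      omega
    obtain ⟨C', N', hC'le, hC'conn, hN'S, hN'verts, hN'card, hN'disj, hC'disj⟩ :=
      ih (D.deleteVerts X) S₂ h4 hS₂sub hS₂card
    refine ⟨Fin.cons C₀ C', Fin.cons N₀ N', ?_, ?_, ?_, ?_, ?_, ?_, ?_⟩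
    · refine Fin.cases ?_ ?_
      · exact induce_le D hXuD
      · intro i
        simpa using (hC'le i).trans Subgraph.deleteVerts_le
    · refine Fin.cases ?_ ?_
      · exact h3
      · intro i; simpa using hC'conn i
    · refine Fin.cases ?_ ?_
      · intro a ha
        exact ((hN₀sub ha).1.1 : a ∈ S)
      · intro i; simp only [Fin.cons_succ]; exact fun a ha => ((hN'S i ha).1 : a ∈ S)
    · refine Fin.cases ?_ ?_
      · intro a ha
        exact Or.inl (hN₀sub ha).2
      · intro i; simpa using hN'verts i
    · refine Fin.cases ?_ ?_
      · exact hN₀card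
      · intro i; simpa using hN'card i
    · -- vertex-set disjointness
      have key : ∀ j, Disjoint N₀ (N' j) := by
        intro j
        rw [Set.disjoint_left]
        intro a ha haj
        exact (hN'S j haj).2 (Or.inl (hN₀sub ha).2)
      intro i j hij
      revert hij
      refine Fin.cases ?_ (fun i' => ?_) i <;> refine Fin.cases ?_ (fun j' => ?_) j
      · intro h; exact absurd rfl h
      · intro _; simpa using key j'
      · intro _; simpa using (key i').symm
      · intro h
        simpa using hN'disj i' j' (by simpa [Fin.succ_inj] using h)
    · -- edge disjointness
      have key : ∀ j, Disjoint C₀.edgeSet (C' j).edgeSet := by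
        intro j
        rw [Set.disjoint_left]
        intro e he hej
        have heD₂ : e ∈ (D.deleteVerts X).edgeSet :=
          Subgraph.edgeSet_mono (hC'le j) hej
        have main : ∀ a b, s(a, b) ∈ C₀.edgeSet →
            s(a, b) ∈ (D.deleteVerts X).edgeSet → False := by
          intro a b hab habD
          rw [Subgraph.mem_edgeSet] at hab habD
          rw [Subgraph.deleteVerts_adj] at habD
          rcases (hab.1 : a ∈ X ∪ {u}) with h | h
          · exact habD.2.1 h
          · rcases (hab.2.1 : b ∈ X ∪ {u}) with h' | h'
            · exact habD.2.2.2.1 h'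
            · have ha' : a = u := h
              have hb' : b = u := h'
              rw [ha', hb'] at habD
              exact (habD.2.2.2.2.adj_sub).ne rfl
        exact Sym2.ind main e he heD₂
      intro i j hij
      revert hij
      refine Fin.cases ?_ (fun i' => ?_) i <;> refine Fin.cases ?_ (fun j' => ?_) j
      · intro h; exact absurd rfl h
      · intro _; simpa using key j'
      · intro _; simpa using (key i').symm
      · intro h
        simpa using hC'disj i' j' (by simpa [Fin.succ_inj] using h)
end ThetaPack

/-- `H` is a model of `θ_r` in `G`: its vertex set splits into two disjoint
connected parts with exactly `r` edges of `H` between them (so contracting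
each part yields the multigraph with two vertices and `r` parallel edges). -/
def IsThetaModel {V : Type} (r : ℕ) (G : SimpleGraph V) (H : G.Subgraph) : Prop :=
  ∃ A B : Set V, A ∪ B = H.verts ∧ Disjoint A B ∧
    (H.induce A).Connected ∧ (H.induce B).Connected ∧
    {e ∈ H.edgeSet | ∃ a ∈ A, ∃ b ∈ B, e = s(a, b)}.ncard = r

/-- `G` contains `k` pairwise edge-disjoint models of `θ_r`. -/
def HasEdgePacking {V : Type} (r : ℕ) (G : SimpleGraph V) (k : ℕ) : Prop :=
  ∃ H : Fin k → G.Subgraph, (∀ i, IsThetaModel r G (H i)) ∧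
    ∀ i j, i ≠ j → Disjoint (H i).edgeSet (H j).edgeSet

/-- `G` is 2-connected: connected, at least 3 vertices, and removing any
single vertex leaves it connected. -/
def Biconnected {V : Type} [Fintype V] (G : SimpleGraph V) : Prop :=
  G.Connected ∧ 3 ≤ Fintype.card V ∧
    ∀ v : V, (((⊤ : G.Subgraph).deleteVerts {v}).coe).Connected

/-- Every 2-connected graph with maximum degree at least 2kr contains
k pairwise edge-disjoint models of θ_r. -/
theorem stmt1 {V : Type} [Fintype V] [DecidableEq V] (G : SimpleGraph V) [DecidableRel G.Adj]
    (k r : ℕ) (hk : 0 < k) (hr : 0 < r)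
    (hG : Biconnected G) (hdeg : ∃ v, 2 * k * r ≤ G.degree v) :
    HasEdgePacking r G k := by
  classical
  obtain ⟨v, hv⟩ := hdeg
  set D₀ := (⊤ : G.Subgraph).deleteVerts {v} with hD₀
  have hconn : D₀.Connected := ⟨hG.2.2 v⟩
  set S : Set V := G.neighborSet v with hSdef
  have hSsub : S ⊆ D₀.verts := by
    intro y hy
    rw [hD₀, Subgraph.deleteVerts_verts]
    exact ⟨trivial, by simpa using (hy : G.Adj v y).ne'⟩
  have hScard : 2 * k * r ≤ S.ncard := by
    have h5 : S.ncard = G.degree v := by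
      rw [hSdef, Set.ncard_eq_toFinset_card', Set.toFinset_card,
        card_neighborSet_eq_degree]
    omega
  obtain ⟨C, N, hCle, hCconn, hNS, hNverts, hNcard, hNdisj, hCdisj⟩ :=
    ThetaPack.pack hr k D₀ S hconn hSsub hScard
  have hvC : ∀ i, v ∉ (C i).verts := by
    intro i h
    have h6 := (hCle i).1 h
    rw [hD₀, Subgraph.deleteVerts_verts] at h6
    exact h6.2 rfl
  have hvN : ∀ i, v ∉ N i := fun i h => hvC i (hNverts i h)
  let H : Fin k → G.Subgraph := fun i =>
    { verts := (C i).verts ∪ {v}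
      Adj := fun a b => (C i).Adj a b ∨ (a = v ∧ b ∈ N i) ∨ (b = v ∧ a ∈ N i)
      adj_sub := by
        rintro a b (h | ⟨ha, h⟩ | ⟨hb, h⟩)
        · exact (C i).adj_sub h
        · rw [ha]; exact (hNS i h : b ∈ G.neighborSet v)
        · rw [hb]; exact ((hNS i h : a ∈ G.neighborSet v) : G.Adj v a).symm
      edge_vert := by
        rintro a b (h | ⟨ha, h⟩ | ⟨hb, h⟩)
        · exact Or.inl h.fst_mem
        · exact Or.inr ha
        · exact Or.inl (hNverts i h)
      symm := by
        constructor
        rintro a b (h | h | h)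
        · exact Or.inl h.symm
        · exact Or.inr (Or.inr h)
        · exact Or.inr (Or.inl h) }
  have hHadj : ∀ i a b, (H i).Adj a b ↔
      ((C i).Adj a b ∨ (a = v ∧ b ∈ N i) ∨ (b = v ∧ a ∈ N i)) := fun _ _ _ => Iff.rfl
  refine ⟨H, ?_, ?_⟩
  · intro i
    refine ⟨{v}, (C i).verts, ?_, ?_, ?_, ?_, ?_⟩
    · exact Set.union_comm _ _
    · rw [Set.disjoint_singleton_left]
      exact hvC i
    · exact ThetaPack.single_vertex_connected (x := v) rfl
    · have heq : (H i).induce (C i).verts = C i := by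
        ext a b
        · rfl
        · simp only [Subgraph.induce_adj]
          constructor
          · rintro ⟨ha, hb, h | ⟨rfl, h⟩ | ⟨rfl, h⟩⟩
            · exact h
            · exact absurd ha (hvC i)
            · exact absurd hb (hvC i)
          · intro h
            exact ⟨h.fst_mem, h.snd_mem, Or.inl h⟩
      rw [heq]
      exact hCconn i
    · have heq : {e ∈ (H i).edgeSet | ∃ a ∈ ({v} : Set V), ∃ b ∈ (C i).verts, e = s(a, b)}
          = (fun b => s(v, b)) '' (N i) := by
        ext e
        simp only [Set.mem_setOf_eq, Set.mem_image, Set.mem_singleton_iff]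
        constructor
        · rintro ⟨he, a, ha, b, hb, rfl⟩
          have hav : a = v := ha
          rw [Subgraph.mem_edgeSet] at he
          rcases (hHadj i a b).mp he with h | ⟨-, h⟩ | ⟨hbv, h⟩
          · rw [hav] at h
            exact absurd h.fst_mem (hvC i)
          · exact ⟨b, h, by rw [hav]⟩
          · rw [hbv] at hb
            exact absurd hb (hvC i)
        · rintro ⟨b, hb, rfl⟩
          exact ⟨Subgraph.mem_edgeSet.mpr ((hHadj i v b).mpr (Or.inr (Or.inl ⟨rfl, hb⟩))),
            v, rfl, b, hNverts i hb, rfl⟩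
      rw [heq, Set.ncard_image_of_injOn (fun x _ y _ hxy => Sym2.congr_right.mp hxy)]
      exact hNcard i
  · intro i j hij
    rw [Set.disjoint_left]
    intro e hei hej
    have main : ∀ a b, s(a, b) ∈ (H i).edgeSet → s(a, b) ∈ (H j).edgeSet → False := by
      intro a b h1 h2
      rw [Subgraph.mem_edgeSet] at h1 h2
      rcases (hHadj i a b).mp h1 with g1 | ⟨ha1, hb1⟩ | ⟨hb1, ha1⟩ <;>
        rcases (hHadj j a b).mp h2 with g2 | ⟨ha2, hb2⟩ | ⟨hb2, ha2⟩
      · exact Set.disjoint_left.mp (hCdisj i j hij)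
          (Subgraph.mem_edgeSet.mpr g1) (Subgraph.mem_edgeSet.mpr g2)
      · exact hvC i (ha2 ▸ g1.fst_mem)
      · exact hvC i (hb2 ▸ g1.snd_mem)
      · exact hvC j (ha1 ▸ g2.fst_mem)
      · exact Set.disjoint_left.mp (hNdisj i j hij) hb1 hb2
      · exact hvN i (hb2 ▸ hb1)
      · exact hvC j (hb1 ▸ g2.snd_mem)
      · exact hvN i (ha2 ▸ ha1)
      · exact Set.disjoint_left.mp (hNdisj i j hij) ha1 ha2
    exact Sym2.ind main e hei hej
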